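/- Let α be a Borel probability measure on ℝ with infinite support and all moments finite, let (a_n, b_n) be the three-term recurrence coefficients of its orthonormal polynomials, Δ_n(α) = det M_n(α), and let l_{i,j} be the entries of the Cholesky factor of M_n(α). Then a_1² = m_2(α) − m_1(α)², for n ≥ 2: a_n² = Δ_n(α) Δ_{n−2}(α)/Δ_{n−1}(α)², and for n ≥ 2: b_n = (Δ_{n−1}(α)/Δ_n(α)) l_{n+1,n} l_{n,n} − (Δ_{n−2}(α)/Δ_{n−1}(α)) l_{n,n−1} l_{n−1,n−1}. -/

import Mathlib

open MeasureTheory Matrix Polynomial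

/-- The `k`-th moment of the measure `α`. -/
noncomputable def mom (α : Measure ℝ) (k : ℕ) : ℝ := ∫ x, x ^ k ∂α

/-- The `(N+1) × (N+1)` Hankel moment matrix of `α`. -/
noncomputable def momMatrix (α : Measure ℝ) (N : ℕ) :
    Matrix (Fin (N + 1)) (Fin (N + 1)) ℝ :=
  Matrix.of fun i j => mom α ((i : ℕ) + (j : ℕ))

/-- The (topological) support of a measure on `ℝ`. -/
def measSupport (α : Measure ℝ) : Set ℝ := {x | ∀ U ∈ nhds x, 0 < α U}

noncomputable def cc (α : Measure ℝ) (p : ℕ → Polynomial ℝ) (i j : ℕ) : ℝ :=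
  ∫ x, x ^ i * (p j).eval x ∂α

noncomputable def ccMat (α : Measure ℝ) (p : ℕ → Polynomial ℝ) (N : ℕ) :
    Matrix (Fin (N + 1)) (Fin (N + 1)) ℝ :=
  Matrix.of fun i j => cc α p (i : ℕ) (j : ℕ)

section Aux

variable (α : Measure ℝ) (p : ℕ → Polynomial ℝ) (a b : ℕ → ℝ)
variable (hint : ∀ k, Integrable (fun x : ℝ => x ^ k) α)
variable (hdeg : ∀ k, (p k).natDegree = k) (hlead : ∀ k, 0 < (p k).leadingCoeff)
variable (horth : ∀ j k, ∫ x, (p j).eval x * (p k).eval x ∂α = if j = k then 1 else 0)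
variable (hrec : ∀ k : ℕ, ∀ x : ℝ, x * (p k).eval x =
      a (k + 1) * (p (k + 1)).eval x + b k * (p k).eval x + a k * (p (k - 1)).eval x)

include hint in
lemma integrable_poly' (q : Polynomial ℝ) : Integrable (fun x => q.eval x) α := by
  have h : (fun x : ℝ => q.eval x)
      = fun x => ∑ k ∈ Finset.range (q.natDegree + 1), q.coeff k * x ^ k := by
    funext x; rw [Polynomial.eval_eq_sum_range]
  rw [h]
  exact MeasureTheory.integrable_finset_sum _ (fun k _ => (hint k).const_mul _)

include hdeg hlead in
lemma expand_le : ∀ d : ℕ, ∀ q : Polynomial ℝ, q.natDegree ≤ d →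
      ∃ g : ℕ → ℝ, q = ∑ k ∈ Finset.range (d + 1), C (g k) * p k := by
  intro d
  induction d with
  | zero =>
    intro q hq
    have hp0 : p 0 = C ((p 0).coeff 0) := (p 0).eq_C_of_natDegree_le_zero (le_of_eq (hdeg 0))
    have hc0 : (p 0).coeff 0 ≠ 0 := by
      have := hlead 0
      rw [Polynomial.leadingCoeff, hdeg 0] at this
      exact ne_of_gt this
    refine ⟨fun _ => q.coeff 0 / (p 0).coeff 0, ?_⟩
    rw [Finset.sum_range_one]
    conv_rhs => rw [hp0]
    simp only [Polynomial.coeff_C_zero]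
    rw [← Polynomial.C_mul, div_mul_cancel₀ _ hc0]
    exact q.eq_C_of_natDegree_le_zero hq
  | succ d ih =>
    intro q hq
    set c : ℝ := q.coeff (d + 1) / (p (d + 1)).coeff (d + 1) with hc
    have hcd : (p (d + 1)).coeff (d + 1) ≠ 0 := by
      have := hlead (d + 1)
      rw [Polynomial.leadingCoeff, hdeg (d + 1)] at this
      exact ne_of_gt this
    set r : Polynomial ℝ := q - C c * p (d + 1) with hr
    have hrd : r.natDegree ≤ d := by
      rw [Polynomial.natDegree_le_iff_coeff_eq_zero]
      intro m hm
      rw [hr]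
      simp only [Polynomial.coeff_sub, Polynomial.coeff_C_mul]
      rcases eq_or_lt_of_le (Nat.succ_le_of_lt hm) with h | h
      · rw [← h, hc, div_mul_cancel₀ _ hcd, sub_self]
      · rw [Polynomial.coeff_eq_zero_of_natDegree_lt (lt_of_le_of_lt hq h),
          Polynomial.coeff_eq_zero_of_natDegree_lt (by rw [hdeg]; exact h)]
        ring
    obtain ⟨g, hg⟩ := ih r hrd
    refine ⟨fun k => if k = d + 1 then c else g k, ?_⟩
    rw [Finset.sum_range_succ]
    have heq : ∑ k ∈ Finset.range (d + 1), C (if k = d + 1 then c else g k) * p k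
        = ∑ k ∈ Finset.range (d + 1), C (g k) * p k := by
      apply Finset.sum_congr rfl
      intro k hk
      have hk' : k ≠ d + 1 := by rw [Finset.mem_range] at hk; omega
      rw [if_neg hk']
    rw [heq]
    have hgoal : (fun k => if k = d + 1 then c else g k) (d + 1) = c := if_pos rfl
    rw [hgoal, ← hg, hr]
    ring

include hint horth in
lemma sum_int (d : ℕ) (g : ℕ → ℝ) (q : Polynomial ℝ)
    (hq : q = ∑ k ∈ Finset.range (d + 1), C (g k) * p k)
    (j : ℕ) : ∫ x, q.eval x * (p j).eval x ∂α = if j ≤ d then g j else 0 := by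
  have h1 : (fun x => q.eval x * (p j).eval x)
      = fun x => ∑ k ∈ Finset.range (d + 1), g k * ((p k * p j).eval x) := by
    funext x
    rw [hq]
    simp [Polynomial.eval_finset_sum, Finset.sum_mul, mul_assoc]
  rw [h1, integral_finset_sum _
    (fun k _ => ((integrable_poly' α hint (p k * p j)).const_mul _))]
  have h2 : ∀ k, ∫ x, g k * ((p k * p j).eval x) ∂α = if k = j then g k else 0 := by
    intro k
    rw [MeasureTheory.integral_const_mul]
    have h := horth k j
    simp only [Polynomial.eval_mul]
    rw [h]
    by_cases hkj : k = j <;> simp [hkj]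
  simp_rw [h2]
  rw [Finset.sum_ite_eq' (Finset.range (d + 1)) j g]
  by_cases h : j ≤ d
  · rw [if_pos (Finset.mem_range.mpr (Nat.lt_succ_of_le h)), if_pos h]
  · rw [if_neg (by simpa using h), if_neg h]

include hint hdeg hlead horth in
lemma pow_expand (i : ℕ) :
    (X : Polynomial ℝ) ^ i = ∑ k ∈ Finset.range (i + 1), C (cc α p i k) * p k ∧
    ∀ j, i < j → cc α p i j = 0 := by
  obtain ⟨g, hg⟩ := expand_le p hdeg hlead i ((X : Polynomial ℝ) ^ i)
    (by simp [Polynomial.natDegree_X_pow])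
  have hcc : ∀ j, cc α p i j = if j ≤ i then g j else 0 := by
    intro j
    have h := sum_int α p hint horth i g _ hg j
    simpa [cc] using h
  constructor
  · rw [hg]
    apply Finset.sum_congr rfl
    intro k hk
    rw [hcc k, if_pos (Nat.lt_succ_iff.mp (Finset.mem_range.mp hk))]
  · intro j hj
    rw [hcc j, if_neg (by omega)]

include hint hdeg hlead horth in
lemma cc_diag (i : ℕ) : cc α p i i * (p i).leadingCoeff = 1 := by
  have h := (pow_expand α p hint hdeg hlead horth i).1
  have h2 := congrArg (fun q => Polynomial.coeff q i) h
  simp only [Polynomial.coeff_X_pow, if_pos rfl, Polynomial.finset_sum_coeff,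
    Polynomial.coeff_C_mul] at h2
  rw [Finset.sum_eq_single i] at h2
  · rw [Polynomial.leadingCoeff, hdeg i]
    exact h2.symm
  · intro k hk hki
    have hlt : k < i := by
      have := Finset.mem_range.mp hk; omega
    rw [Polynomial.coeff_eq_zero_of_natDegree_lt (by rw [hdeg]; exact hlt), mul_zero]
  · intro h'
    exact absurd (Finset.mem_range.mpr (Nat.lt_succ_self i)) h'

include hint hdeg hlead horth in
lemma cc_diag_pos (i : ℕ) : 0 < cc α p i i := by
  have h := cc_diag α p hint hdeg hlead horth i
  nlinarith [hlead i, mul_pos (hlead i) (hlead i)]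

include hint hdeg hlead horth in
lemma mom_entry (i j : ℕ) :
    mom α (i + j) = ∑ k ∈ Finset.range (i + 1), cc α p i k * cc α p j k := by
  have hg := (pow_expand α p hint hdeg hlead horth i).1
  have hev : ∀ x : ℝ, x ^ i = ∑ k ∈ Finset.range (i + 1), cc α p i k * (p k).eval x := by
    intro x
    have h := congrArg (Polynomial.eval x) hg
    simpa [Polynomial.eval_finset_sum] using h
  have h1 : (fun x : ℝ => x ^ (i + j))
      = fun x => ∑ k ∈ Finset.range (i + 1), cc α p i k * (x ^ j * (p k).eval x) := by
    funext x
    rw [pow_add, hev x, Finset.sum_mul]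
    exact Finset.sum_congr rfl fun k _ => by ring
  have hI : ∀ k : ℕ, Integrable (fun x : ℝ => x ^ j * (p k).eval x) α := by
    intro k
    have := integrable_poly' α hint (X ^ j * p k)
    simpa using this
  rw [mom, h1, integral_finset_sum _ (fun k _ => (hI k).const_mul _)]
  simp_rw [MeasureTheory.integral_const_mul]
  rfl

include hint hdeg hlead horth in
lemma mom_fact (N : ℕ) : momMatrix α N = ccMat α p N * (ccMat α p N)ᵀ := by
  ext i j
  rw [Matrix.mul_apply]
  simp only [momMatrix, ccMat, Matrix.of_apply, Matrix.transpose_apply]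
  rw [mom_entry α p hint hdeg hlead horth i j]
  rw [Fin.sum_univ_eq_sum_range (fun k => cc α p i k * cc α p j k) (N + 1)]
  apply Finset.sum_subset
  · intro k hk
    rw [Finset.mem_range] at *
    omega
  · intro k hk hnk
    rw [Finset.mem_range] at *
    rw [(pow_expand α p hint hdeg hlead horth i).2 k (by omega), zero_mul]

lemma ccMat_lowerTri (N : ℕ) (hzero : ∀ i j : ℕ, i < j → cc α p i j = 0) :
    (ccMat α p N).BlockTriangular OrderDual.toDual := by
  intro i j hij
  exact hzero i j hij

include hint hdeg hlead horth in
lemma mom_det (N : ℕ) :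
    (momMatrix α N).det = ∏ k ∈ Finset.range (N + 1), (cc α p k k) ^ 2 := by
  rw [mom_fact α p hint hdeg hlead horth N, Matrix.det_mul, Matrix.det_transpose]
  rw [Matrix.det_of_lowerTriangular _ (ccMat_lowerTri α p N
    (fun i j h => (pow_expand α p hint hdeg hlead horth i).2 j h))]
  simp only [ccMat, Matrix.of_apply]
  rw [Fin.prod_univ_eq_prod_range (fun k => cc α p k k) (N + 1)]
  rw [← Finset.prod_mul_distrib]
  exact Finset.prod_congr rfl fun k _ => (sq (cc α p k k)).symm

include hdeg hrec in
lemma kappa_rel (k : ℕ) : (p k).leadingCoeff = a (k + 1) * (p (k + 1)).leadingCoeff := by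
  have hpoly : (X : Polynomial ℝ) * p k
      = C (a (k + 1)) * p (k + 1) + C (b k) * p k + C (a k) * p (k - 1) :=
    Polynomial.funext (fun x => by simpa using hrec k x)
  have h2 := congrArg (fun q => Polynomial.coeff q (k + 1)) hpoly
  simp only [Polynomial.coeff_add, Polynomial.coeff_C_mul, Polynomial.coeff_X_mul] at h2
  rw [Polynomial.coeff_eq_zero_of_natDegree_lt
      (show (p k).natDegree < k + 1 by rw [hdeg]; omega),
    Polynomial.coeff_eq_zero_of_natDegree_lt
      (show (p (k - 1)).natDegree < k + 1 by rw [hdeg]; omega)] at h2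
  rw [Polynomial.leadingCoeff, Polynomial.leadingCoeff, hdeg, hdeg]
  rw [h2]
  ring

include hint hdeg hlead horth hrec in
lemma a_succ_cc (k : ℕ) : a (k + 1) * cc α p k k = cc α p (k + 1) (k + 1) := by
  have h1 := kappa_rel p a b hdeg hrec k
  have h2 := cc_diag α p hint hdeg hlead horth k
  have h3 := cc_diag α p hint hdeg hlead horth (k + 1)
  linear_combination (- cc α p k k * cc α p (k + 1) (k + 1)) * h1
    - a (k + 1) * cc α p k k * h3 + cc α p (k + 1) (k + 1) * h2

include hint hdeg hlead horth hrec in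
lemma b_rel (k : ℕ) :
    cc α p (k + 1) k = b k * cc α p k k + a k * cc α p k (k - 1) := by
  have h1 : (fun x : ℝ => x ^ (k + 1) * (p k).eval x)
      = fun x => (a (k + 1) * (x ^ k * (p (k + 1)).eval x) + b k * (x ^ k * (p k).eval x))
        + a k * (x ^ k * (p (k - 1)).eval x) := by
    funext x
    have h := hrec k x
    calc x ^ (k + 1) * (p k).eval x = x ^ k * (x * (p k).eval x) := by ring
      _ = _ := by rw [h]; ring
  have hI : ∀ m : ℕ, Integrable (fun x : ℝ => x ^ k * (p m).eval x) α := by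
    intro m
    have := integrable_poly' α hint (X ^ k * p m)
    simpa using this
  have e1 : ∫ x, x ^ k * (p (k + 1)).eval x ∂α = 0 :=
    (pow_expand α p hint hdeg hlead horth k).2 (k + 1) (Nat.lt_succ_self k)
  have I1 : Integrable (fun x : ℝ => a (k + 1) * (x ^ k * (p (k + 1)).eval x)) α :=
    (hI (k + 1)).const_mul _
  have I2 : Integrable (fun x : ℝ => b k * (x ^ k * (p k).eval x)) α :=
    (hI k).const_mul _
  have I3 : Integrable (fun x : ℝ => a k * (x ^ k * (p (k - 1)).eval x)) α :=
    (hI (k - 1)).const_mul _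
  have I12 : Integrable (fun x : ℝ => a (k + 1) * (x ^ k * (p (k + 1)).eval x)
      + b k * (x ^ k * (p k).eval x)) α := I1.add I2
  rw [cc, h1, integral_add I12 I3, integral_add I1 I2,
    integral_const_mul, integral_const_mul, integral_const_mul, e1]
  rw [show (∫ x, x ^ k * (p k).eval x ∂α) = cc α p k k from rfl,
    show (∫ x, x ^ k * (p (k - 1)).eval x ∂α) = cc α p k (k - 1) from rfl]
  ring

end Aux

lemma cholesky_unique {N : ℕ} (L C : Matrix (Fin N) (Fin N) ℝ)
    (hL : ∀ i j : Fin N, i < j → L i j = 0) (hC : ∀ i j : Fin N, i < j → C i j = 0)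
    (hLd : ∀ i, 0 < L i i) (hCd : ∀ i, 0 < C i i)
    (h : L * Lᵀ = C * Cᵀ) : L = C := by
  have hU : (Lᵀ).BlockTriangular (id : Fin N → Fin N) := by
    intro i j hij
    exact hL j i hij
  have hV : (Cᵀ).BlockTriangular (id : Fin N → Fin N) := by
    intro i j hij
    exact hC j i hij
  have hdetV : IsUnit (Cᵀ).det := by
    rw [Matrix.det_of_upperTriangular hV]
    exact (Finset.prod_pos fun i _ => by simpa using hCd i).ne'.isUnit
  haveI : Invertible (Cᵀ) := Matrix.invertibleOfIsUnitDet _ hdetV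
  set B : Matrix (Fin N) (Fin N) ℝ := Lᵀ * (Cᵀ)⁻¹ with hB
  have hVV : Cᵀ * (Cᵀ)⁻¹ = 1 := Matrix.mul_nonsing_inv _ hdetV
  have hVV' : (Cᵀ)⁻¹ * Cᵀ = 1 := Matrix.nonsing_inv_mul _ hdetV
  have hBt : Bᵀ * B = 1 := by
    have h1 : Bᵀ * B = ((Cᵀ)⁻¹)ᵀ * (L * Lᵀ) * (Cᵀ)⁻¹ := by
      rw [hB, Matrix.transpose_mul, Matrix.transpose_transpose]
      noncomm_ring
    rw [h1, h, show C * Cᵀ = (Cᵀ)ᵀ * Cᵀ by rw [Matrix.transpose_transpose]]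
    calc ((Cᵀ)⁻¹)ᵀ * ((Cᵀ)ᵀ * Cᵀ) * (Cᵀ)⁻¹
        = ((Cᵀ)⁻¹)ᵀ * (Cᵀ)ᵀ * (Cᵀ * (Cᵀ)⁻¹) := by noncomm_ring
      _ = (Cᵀ * (Cᵀ)⁻¹)ᵀ * (Cᵀ * (Cᵀ)⁻¹) := by rw [Matrix.transpose_mul]
      _ = 1 := by rw [hVV]; simp
  have hBtri : B.BlockTriangular (id : Fin N → Fin N) :=
    hU.mul (Matrix.blockTriangular_inv_of_blockTriangular hV)
  have hBinv : B⁻¹ = Bᵀ := Matrix.inv_eq_left_inv hBt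
  have hBinvTri : (B⁻¹).BlockTriangular (id : Fin N → Fin N) := by
    have hdetB : IsUnit B.det := by
      have := congrArg Matrix.det hBt
      rw [Matrix.det_mul, Matrix.det_transpose, Matrix.det_one] at this
      exact IsUnit.of_mul_eq_one _ this
    haveI : Invertible B := Matrix.invertibleOfIsUnitDet _ hdetB
    exact Matrix.blockTriangular_inv_of_blockTriangular hBtri
  have hBdiag : ∀ i j : Fin N, i ≠ j → B i j = 0 := by
    intro i j hij
    rcases lt_or_gt_of_ne hij with hlt | hgt
    · have h0 := hBinvTri (show (id i : Fin N) < id j by simpa using hlt)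
      rw [hBinv] at h0
      simpa using h0
    · exact hBtri (by simpa using hgt)
  have hBone : ∀ i, B i i = 1 := by
    intro i
    have h11 : B i i * B i i = 1 := by
      have := congrFun (congrFun hBt i) i
      rw [Matrix.mul_apply] at this
      rw [Finset.sum_eq_single i (fun k _ hk => by
        rw [Matrix.transpose_apply, hBdiag k i hk, mul_zero])
        (fun h' => absurd (Finset.mem_univ i) h')] at this
      simpa using this
    have hLB : Lᵀ = B * Cᵀ := by
      rw [hB, Matrix.mul_assoc, hVV', Matrix.mul_one]
    have hdi : L i i = B i i * C i i := by
      have := congrFun (congrFun hLB i) i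
      rw [Matrix.mul_apply] at this
      rw [Finset.sum_eq_single i (fun k _ hk => by
        rw [hBdiag i k (Ne.symm hk), zero_mul])
        (fun h' => absurd (Finset.mem_univ i) h')] at this
      simpa using this
    have hBpos : 0 < B i i := by
      by_contra hcon
      push_neg at hcon
      have hle : B i i * C i i ≤ 0 := mul_nonpos_iff.mpr (Or.inr ⟨hcon, (hCd i).le⟩)
      have := hLd i
      rw [hdi] at this
      linarith
    nlinarith
  have hLB : Lᵀ = B * Cᵀ := by
    rw [hB, Matrix.mul_assoc, hVV', Matrix.mul_one]
  have hfin : Lᵀ = Cᵀ := by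
    rw [hLB]
    ext i j
    rw [Matrix.mul_apply]
    rw [Finset.sum_eq_single i (fun k _ hk => by
      rw [hBdiag i k (Ne.symm hk), zero_mul])
      (fun h' => absurd (Finset.mem_univ i) h')]
    rw [hBone i, one_mul]
  calc L = Lᵀᵀ := (Matrix.transpose_transpose L).symm
    _ = Cᵀᵀ := by rw [hfin]
    _ = C := Matrix.transpose_transpose C

theorem stmt_10 (α : Measure ℝ) [IsProbabilityMeasure α]
    (hsupp : (measSupport α).Infinite)
    (hint : ∀ k, Integrable (fun x : ℝ => x ^ k) α)
    (p : ℕ → Polynomial ℝ)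
    (hdeg : ∀ k, (p k).natDegree = k)
    (hlead : ∀ k, 0 < (p k).leadingCoeff)
    (horth : ∀ j k, ∫ x, (p j).eval x * (p k).eval x ∂α = if j = k then 1 else 0)
    (a b : ℕ → ℝ) (ha0 : a 0 = 0) (ha : ∀ k, 1 ≤ k → 0 < a k)
    (hrec : ∀ k : ℕ, ∀ x : ℝ, x * (p k).eval x =
      a (k + 1) * (p (k + 1)).eval x + b k * (p k).eval x + a k * (p (k - 1)).eval x) :
    a 1 ^ 2 = mom α 2 - mom α 1 ^ 2 ∧
    ∀ n : ℕ, ∀ hn : 2 ≤ n,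
      ∀ L : Matrix (Fin (n + 2)) (Fin (n + 2)) ℝ,
        (∀ i j : Fin (n + 2), i < j → L i j = 0) →
        (∀ i, 0 < L i i) →
        momMatrix α (n + 1) = L * Lᵀ →
        (a n ^ 2 = (momMatrix α n).det * (momMatrix α (n - 2)).det /
            (momMatrix α (n - 1)).det ^ 2 ∧
         b n = ((momMatrix α (n - 1)).det / (momMatrix α n).det) *
                 L ⟨n + 1, by omega⟩ ⟨n, by omega⟩ * L ⟨n, by omega⟩ ⟨n, by omega⟩ -
               ((momMatrix α (n - 2)).det / (momMatrix α (n - 1)).det) *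
                 L ⟨n, by omega⟩ ⟨n - 1, by omega⟩ * L ⟨n - 1, by omega⟩ ⟨n - 1, by omega⟩) := by
  have hm0 : mom α 0 = 1 := by
    simp [mom]
  constructor
  · -- a 1 ^ 2 = mom α 2 - mom α 1 ^ 2
    have hA : (momMatrix α 1).det = cc α p 0 0 ^ 2 * cc α p 1 1 ^ 2 := by
      rw [mom_det α p hint hdeg hlead horth 1, Finset.prod_range_succ, Finset.prod_range_one]
    have hB : (momMatrix α 1).det = mom α 0 * mom α 2 - mom α 1 * mom α 1 := by
      rw [Matrix.det_fin_two]
      simp [momMatrix]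
    have hD : cc α p 0 0 ^ 2 = 1 := by
      have h1 : (momMatrix α 0).det = cc α p 0 0 ^ 2 := by
        rw [mom_det α p hint hdeg hlead horth 0, Finset.prod_range_one]
      have h2 : (momMatrix α 0).det = mom α 0 := by
        rw [Matrix.det_fin_one]
        simp [momMatrix]
      rw [← h1, h2, hm0]
    have hE := a_succ_cc α p a b hint hdeg hlead horth hrec 0
    linear_combination hB - hA + mom α 2 * hm0 - a 1 ^ 2 * hD
      + (a 1 * cc α p 0 0 + cc α p 1 1) * hE - cc α p 1 1 ^ 2 * hD
  · intro n hn L hLtri hLdiag hfact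
    obtain ⟨m, rfl⟩ : ∃ m, n = m + 2 := ⟨n - 2, by omega⟩
    have hLC : L = ccMat α p (m + 2 + 1) := by
      apply cholesky_unique L (ccMat α p (m + 2 + 1)) hLtri
      · intro i j hij
        exact (pow_expand α p hint hdeg hlead horth i).2 j hij
      · exact hLdiag
      · intro i
        exact cc_diag_pos α p hint hdeg hlead horth i
      · exact hfact.symm.trans (mom_fact α p hint hdeg hlead horth (m + 2 + 1))
    set P : ℝ := ∏ k ∈ Finset.range (m + 1), cc α p k k ^ 2 with hPdef
    set c1 : ℝ := cc α p (m + 1) (m + 1) with hc1def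
    set c2 : ℝ := cc α p (m + 2) (m + 2) with hc2def
    have hP : 0 < P := Finset.prod_pos fun k _ =>
      pow_pos (cc_diag_pos α p hint hdeg hlead horth k) 2
    have hc1 : 0 < c1 := cc_diag_pos α p hint hdeg hlead horth (m + 1)
    have hc2 : 0 < c2 := cc_diag_pos α p hint hdeg hlead horth (m + 2)
    have hD2 : (momMatrix α m).det = P := mom_det α p hint hdeg hlead horth m
    have hD1 : (momMatrix α (m + 1)).det = P * c1 ^ 2 := by
      rw [mom_det α p hint hdeg hlead horth (m + 1), Finset.prod_range_succ]
    have hD0 : (momMatrix α (m + 2)).det = P * c1 ^ 2 * c2 ^ 2 := by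
      rw [mom_det α p hint hdeg hlead horth (m + 2), Finset.prod_range_succ,
        Finset.prod_range_succ]
    have haval : a (m + 2) * c1 = c2 := a_succ_cc α p a b hint hdeg hlead horth hrec (m + 1)
    constructor
    · show a (m + 2) ^ 2 = (momMatrix α (m + 2)).det * (momMatrix α m).det /
        (momMatrix α (m + 1)).det ^ 2
      rw [hD0, hD1, hD2, eq_div_iff (by positivity : ((P * c1 ^ 2) ^ 2 : ℝ) ≠ 0)]
      linear_combination (P ^ 2 * c1 ^ 2 * (a (m + 2) * c1 + c2)) * haval
    · rw [hLC]
      show b (m + 2) = ((momMatrix α (m + 1)).det / (momMatrix α (m + 2)).det) *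
          cc α p (m + 2 + 1) (m + 2) * cc α p (m + 2) (m + 2) -
          ((momMatrix α m).det / (momMatrix α (m + 1)).det) *
          cc α p (m + 2) (m + 1) * cc α p (m + 1) (m + 1)
      set X : ℝ := cc α p (m + 2 + 1) (m + 2) with hXdef
      set Y : ℝ := cc α p (m + 2) (m + 1) with hYdef
      have hb : X = b (m + 2) * c2 + a (m + 2) * Y := by
        have h := b_rel α p a b hint hdeg hlead horth hrec (m + 2)
        simpa [hXdef, hYdef, hc2def] using h
      have hbval : b (m + 2) * (c1 * c2) = X * c1 - Y * c2 := by
        linear_combination (- c1) * hb - Y * haval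
      rw [hD0, hD1, hD2]
      have hre : (P * c1 ^ 2) / (P * c1 ^ 2 * c2 ^ 2) * X * c2
          - P / (P * c1 ^ 2) * Y * c1 = (X * c1 - Y * c2) / (c1 * c2) := by
        field_simp
      rw [hre, eq_div_iff (by positivity : (c1 * c2 : ℝ) ≠ 0)]
      exact hbval
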